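/- Let $k \geq 1$, let $b_{j,l}$ and $\delta_{j,l}$ ($1 \le j,l \le k$) be complex numbers with $|b_{j,l}| \le M$ and $|\delta_{j,l}| \le \epsilon$ for all $j,l$. Then $|\det[b_{j,l}(1 + \delta_{j,l})] - \det[b_{j,l}]| \le ((1+\epsilon)^k - 1) \, k^{k/2} M^k$. -/

import Mathlib

open Matrix Finset ComplexOrder

lemma trace_herm (k : ℕ) (H : Matrix (Fin k) (Fin k) ℂ) (hH : H.IsHermitian) :
    H.trace = ((∑ i, hH.eigenvalues i : ℝ) : ℂ) := by
  simp [hH.trace_eq_sum_eigenvalues]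

lemma hadamard_weak (k : ℕ) (hk : 1 ≤ k) (A : Matrix (Fin k) (Fin k) ℂ) (M : ℝ) (hM : 0 ≤ M)
    (hA : ∀ i j, ‖A i j‖ ≤ M) :
    ‖A.det‖ ≤ (k:ℝ) ^ ((k:ℝ)/2) * M ^ k := by
  set H := Aᴴ * A with hHdef
  have hP : H.PosSemidef := Matrix.posSemidef_conjTranspose_mul_self A
  have hH := hP.isHermitian
  set μ := hH.eigenvalues with hμ
  have hμ0 : ∀ i, 0 ≤ μ i := hP.eigenvalues_nonneg
  have hdet : ‖A.det‖ ^ 2 = ∏ i, μ i := by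
    have h1 : H.det = ∏ i, (μ i : ℂ) := hH.det_eq_prod_eigenvalues
    have h2 : H.det = ((‖A.det‖ ^ 2 : ℝ) : ℂ) := by
      rw [hHdef, Matrix.det_mul, Matrix.det_conjTranspose]
      rw [Complex.sq_norm, Complex.normSq_eq_conj_mul_self]
      rfl
    have := h2.symm.trans h1
    push_cast at this
    exact_mod_cast this
  have htr : ∑ i, μ i ≤ (k:ℝ) * ((k:ℝ) * M ^ 2) := by
    have h2 : H.trace = ((∑ i, μ i : ℝ) : ℂ) := trace_herm k H hH
    have h3 : H.trace = ((∑ i, ∑ j, ‖A j i‖ ^ 2 : ℝ) : ℂ) := by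
      rw [Matrix.trace]
      push_cast
      refine Finset.sum_congr rfl fun i _ => ?_
      simp only [Matrix.diag, hHdef, Matrix.mul_apply, Matrix.conjTranspose_apply]
      push_cast
      refine Finset.sum_congr rfl fun j _ => ?_
      rw [RCLike.star_def, ← Complex.normSq_eq_conj_mul_self, Complex.normSq_eq_norm_sq]
      push_cast
      ring
    have heq : ∑ i, μ i = ∑ i, ∑ j, ‖A j i‖ ^ 2 := by
      exact_mod_cast h2.symm.trans h3
    rw [heq]
    calc ∑ i, ∑ j : Fin k, ‖A j i‖ ^ 2 ≤ ∑ i : Fin k, ∑ j : Fin k, M ^ 2 := by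
          refine Finset.sum_le_sum fun i _ => Finset.sum_le_sum fun j _ => ?_
          exact pow_le_pow_left₀ (norm_nonneg _) (hA j i) 2
      _ = (k:ℝ) * ((k:ℝ) * M ^ 2) := by simp [mul_assoc]
  -- AM-GM
  have hamgm : ∏ i, μ i ≤ ((k:ℝ) * M ^ 2) ^ k := by
    have hw : ∀ i ∈ Finset.univ (α := Fin k), (0:ℝ) ≤ 1 := fun _ _ => zero_le_one
    have hsum : 0 < ∑ _i : Fin k, (1:ℝ) := by
      simp only [Finset.sum_const, card_univ, Fintype.card_fin, nsmul_eq_mul, mul_one]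
      exact_mod_cast hk
    have h := Real.geom_mean_le_arith_mean Finset.univ (fun _ => (1:ℝ)) μ hw hsum
      (fun i _ => hμ0 i)
    simp only [Real.rpow_one, Finset.sum_const, card_univ, Fintype.card_fin, nsmul_eq_mul,
      mul_one, one_mul] at h
    have hk0 : (k:ℝ) ≠ 0 := by positivity
    have hprod0 : 0 ≤ ∏ i, μ i := Finset.prod_nonneg fun i _ => hμ0 i
    have h2 : ∏ i, μ i ≤ ((∑ i, μ i) / k) ^ k := by
      have := Real.rpow_le_rpow (Real.rpow_nonneg hprod0 _) h (by positivity : (0:ℝ) ≤ (k:ℝ))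
      rwa [← Real.rpow_mul hprod0, inv_mul_cancel₀ hk0, Real.rpow_one,
        Real.rpow_natCast] at this
    refine h2.trans (pow_le_pow_left₀ (div_nonneg (Finset.sum_nonneg fun i _ => hμ0 i) (by positivity)) ?_ k)
    rw [div_le_iff₀ (by positivity)]
    linarith [htr]
  -- conclude
  have habs : ‖A.det‖ ≤ Real.sqrt (((k:ℝ) * M ^ 2) ^ k) := by
    rw [← Real.sqrt_sq (norm_nonneg A.det), hdet]
    exact Real.sqrt_le_sqrt hamgm
  refine habs.trans_eq ?_
  rw [mul_pow, Real.sqrt_mul (by positivity), ← pow_mul]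
  have h1 : Real.sqrt ((k:ℝ)^k) = (k:ℝ)^((k:ℝ)/2) := by
    rw [Real.sqrt_eq_rpow, ← Real.rpow_natCast ((k:ℝ)) k, ← Real.rpow_mul (by positivity)]
    ring_nf
  have h2 : Real.sqrt (M^(2*k)) = M^k := by
    rw [mul_comm, pow_mul, Real.sqrt_sq (by positivity)]
  rw [h1, h2]

lemma hadamard_rows (k : ℕ) (hk : 1 ≤ k) (A : Matrix (Fin k) (Fin k) ℂ) (c : Fin k → ℝ)
    (hc : ∀ i, 0 ≤ c i) (hA : ∀ i j, ‖A i j‖ ≤ c i) :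
    ‖A.det‖ ≤ (k:ℝ) ^ ((k:ℝ)/2) * ∏ i, c i := by
  by_cases hz : ∃ i, c i = 0
  · obtain ⟨i, hi⟩ := hz
    have hrow : ∀ j, A i j = 0 := fun j => by
      have h := hA i j; rw [hi] at h
      exact norm_eq_zero.mp (le_antisymm h (norm_nonneg _))
    rw [Matrix.det_eq_zero_of_row_eq_zero i hrow, Finset.prod_eq_zero (Finset.mem_univ i) hi]
    simp
  · push_neg at hz
    have hpos : ∀ i, 0 < c i := fun i => (hc i).lt_of_ne (Ne.symm (hz i))
    set B : Matrix (Fin k) (Fin k) ℂ := Matrix.of fun i j => (c i : ℂ)⁻¹ * A i j with hBdef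
    have hB : ∀ i j, ‖B i j‖ ≤ 1 := by
      intro i j
      show ‖(c i : ℂ)⁻¹ * A i j‖ ≤ 1
      rw [norm_mul, norm_inv, Complex.norm_real, Real.norm_eq_abs, abs_of_pos (hpos i),
        inv_mul_le_iff₀ (hpos i), mul_one]
      exact hA i j
    have hAB : A = Matrix.diagonal (fun i => (c i : ℂ)) * B := by
      ext i j
      rw [Matrix.diagonal_mul]
      simp only [hBdef, Matrix.of_apply, ← mul_assoc]
      rw [mul_inv_cancel₀ (by exact_mod_cast (hpos i).ne'), one_mul]
    calc ‖A.det‖ = (∏ i, c i) * ‖B.det‖ := by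
          rw [hAB, Matrix.det_mul, Matrix.det_diagonal, norm_mul, norm_prod]
          congr 1
          exact Finset.prod_congr rfl fun i _ => by
            rw [Complex.norm_real, Real.norm_eq_abs, abs_of_pos (hpos i)]
      _ ≤ (∏ i, c i) * ((k:ℝ) ^ ((k:ℝ)/2) * 1 ^ k) := by
          refine mul_le_mul_of_nonneg_left ?_ (Finset.prod_nonneg fun i _ => hc i)
          exact hadamard_weak k hk B 1 zero_le_one hB
      _ = (k:ℝ) ^ ((k:ℝ)/2) * ∏ i, c i := by ring

theorem det_perturbation_bound (k : ℕ) (hk : 1 ≤ k)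
    (b δ : Matrix (Fin k) (Fin k) ℂ) (M ε : ℝ) (hM : 0 ≤ M) (hε : 0 ≤ ε)
    (hb : ∀ j l, ‖b j l‖ ≤ M)
    (hδ : ∀ j l, ‖δ j l‖ ≤ ε) :
    ‖(Matrix.of fun j l => b j l * (1 + δ j l)).det - b.det‖ ≤
      ((1 + ε) ^ k - 1) * (k : ℝ) ^ ((k : ℝ) / 2) * M ^ k := by
  set f : ℕ → Matrix (Fin k) (Fin k) ℂ := fun m =>
    Matrix.of fun r c => if (r:ℕ) < m then b r c * (1 + δ r c) else b r c with hf
  have h0 : f 0 = b := by ext r c; simp [hf]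
  have hke : f k = Matrix.of fun j l => b j l * (1 + δ j l) := by
    ext r c; simp [hf, r.is_lt]
  have htel : (Matrix.of fun j l => b j l * (1 + δ j l)).det - b.det =
      ∑ m ∈ Finset.range k, ((f (m+1)).det - (f m).det) := by
    rw [Finset.sum_range_sub (fun m => (f m).det), h0, hke]
  rw [htel]
  -- bound each term
  have hterm : ∀ m, m < k → ‖(f (m+1)).det - (f m).det‖ ≤
      (k:ℝ) ^ ((k:ℝ)/2) * (M ^ k * (ε * (1+ε) ^ m)) := by
    intro m hm
    set i : Fin k := ⟨m, hm⟩ with hi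
    have hdiff : (f (m+1)).det - (f m).det =
        (Matrix.updateRow (f m) i (fun c => b i c * δ i c)).det := by
      have h1 : f (m+1) = Matrix.updateRow (f m) i
          (fun c => b i c + b i c * δ i c) := by
        ext r c
        by_cases hr : r = i
        · subst hr
          simp [hf, Matrix.updateRow_self, hi]
          ring
        · rw [Matrix.updateRow_ne hr]
          have hrm : (r:ℕ) ≠ m := fun h => hr (Fin.ext h)
          simp only [hf, Matrix.of_apply]
          have : (r:ℕ) < m + 1 ↔ (r:ℕ) < m := by omega
          simp only [this]
      have h2 : f m = Matrix.updateRow (f m) i (fun c => b i c) := by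
        ext r c
        by_cases hr : r = i
        · subst hr
          simp [hf, Matrix.updateRow_self, hi]
        · rw [Matrix.updateRow_ne hr]
      rw [h1, show (fun c => b i c + b i c * δ i c) =
        (fun c => b i c) + (fun c => b i c * δ i c) from rfl, Matrix.det_updateRow_add, ← h2]
      ring
    rw [hdiff]
    set w : ℕ → ℝ := fun j => if j < m then (1+ε) else if j = m then ε else 1 with hw
    have hwnn : ∀ j, 0 ≤ w j := by
      intro j; simp only [hw]
      split
      · linarith
      · split
        · exact hε
        · exact zero_le_one
    have hbound := hadamard_rows k hk (Matrix.updateRow (f m) i (fun c => b i c * δ i c))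
      (fun r => M * w r.1) (fun r => mul_nonneg hM (hwnn r.1)) ?_
    · refine hbound.trans_eq ?_
      congr 1
      rw [Finset.prod_mul_distrib, Finset.prod_const, Finset.card_univ, Fintype.card_fin]
      congr 1
      rw [Fin.prod_univ_eq_prod_range (fun j => w j) k]
      have hsub : ∏ j ∈ Finset.range k, w j = ∏ j ∈ Finset.range (m+1), w j := by
        refine (Finset.prod_subset (Finset.range_subset_range.2 (by omega)) ?_).symm
        intro j hj hj'
        simp only [Finset.mem_range] at hj hj'
        simp only [hw]
        rw [if_neg (by omega), if_neg (by omega)]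
      rw [hsub, Finset.prod_range_succ]
      have : ∏ j ∈ Finset.range m, w j = (1+ε) ^ m := by
        rw [Finset.prod_congr rfl (fun j hj => ?_), Finset.prod_const, Finset.card_range]
        simp only [hw]
        rw [if_pos (Finset.mem_range.mp hj)]
      have hwm : w m = ε := by simp [hw]
      rw [this, hwm]
      ring
    · intro r c
      by_cases hr : r = i
      · subst hr
        rw [Matrix.updateRow_self]
        have hwm : w ((i:Fin k):ℕ) = ε := by simp [hw, hi]
        show ‖b i c * δ i c‖ ≤ M * w ((i:Fin k):ℕ)
        rw [hwm, norm_mul]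
        exact mul_le_mul (hb i c) (hδ i c) (norm_nonneg _) hM
      · rw [Matrix.updateRow_ne hr]
        have hrm : (r:ℕ) ≠ m := fun h => hr (Fin.ext h)
        show ‖if (r:ℕ) < m then b r c * (1 + δ r c) else b r c‖ ≤ M * w (r:ℕ)
        by_cases hlt : (r:ℕ) < m
        · have hwr : w (r:ℕ) = 1 + ε := by simp [hw, hlt]
          rw [if_pos hlt, hwr, norm_mul]
          have h1 : ‖1 + δ r c‖ ≤ 1 + ε := by
            calc ‖1 + δ r c‖ ≤ ‖(1:ℂ)‖ + ‖δ r c‖ :=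
                  norm_add_le _ _
              _ ≤ 1 + ε := by rw [norm_one]; linarith [hδ r c]
          exact mul_le_mul (hb r c) h1 (norm_nonneg _) hM
        · have hwr : w (r:ℕ) = 1 := by simp [hw, hlt, hrm]
          rw [if_neg hlt, hwr, mul_one]
          exact hb r c
  calc ‖∑ m ∈ Finset.range k, ((f (m+1)).det - (f m).det)‖
      ≤ ∑ m ∈ Finset.range k, ‖(f (m+1)).det - (f m).det‖ :=
        norm_sum_le _ _
    _ ≤ ∑ m ∈ Finset.range k, (k:ℝ) ^ ((k:ℝ)/2) * (M ^ k * (ε * (1+ε) ^ m)) :=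
        Finset.sum_le_sum fun m hm => hterm m (Finset.mem_range.mp hm)
    _ = ((1 + ε) ^ k - 1) * (k : ℝ) ^ ((k : ℝ) / 2) * M ^ k := by
        rw [← Finset.mul_sum, ← Finset.mul_sum, ← Finset.mul_sum]
        have : (∑ m ∈ Finset.range k, (1+ε) ^ m) * ((1+ε) - 1) = (1+ε) ^ k - 1 :=
          geom_sum_mul (1+ε) k
        have h2 : ε * ∑ m ∈ Finset.range k, (1+ε) ^ m = (1+ε) ^ k - 1 := by
          rw [mul_comm]; rw [show (1+ε) - 1 = ε by ring] at this; exact this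
        rw [h2]; ring
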